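/- Let F be a free filter on ℕ, let h : Q → Q be a homeomorphism of the Hilbert cube, and let D ⊆ (-1,1)^ℕ be a countable dense subset of Q. Assume there is z ∈ C_F such that for every d ∈ D and every n ∈ ℕ, |d(n) − h(d)(n)| ≤ |z(n)|. Then h[K_F] = K_F. -/
import Mathlib


open Filter Topology Set

/-- The Hilbert cube `Q = [-1,1]^ℕ` with the product topology. -/
abbrev Hcube : Type := {f : ℕ → ℝ // ∀ n, f n ∈ Set.Icc (-1 : ℝ) 1}

/-- `K_F`: the points of the Hilbert cube that `F`-converge to `0`. -/
def KF (F : Filter ℕ) : Set Hcube :=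
  {f | ∀ m : ℕ, {n | |f.val n| < (1 / 2) ^ m} ∈ F}

/-- The pseudointerior `(-1,1)^ℕ` of the Hilbert cube. -/
def pseudoInt : Set Hcube := {f | ∀ n, |f.val n| < 1}

/-- `C_F = K_F ∩ (-1,1)^ℕ`. -/
def CF (F : Filter ℕ) : Set Hcube := KF F ∩ pseudoInt

/-- `K_F` is stable under perturbations bounded pointwise by an element of `K_F`. -/
lemma KF_perturb (F : Filter ℕ) (z : Hcube) (hzK : z ∈ KF F)
    (f g : Hcube) (hf : f ∈ KF F) (hb : ∀ n, |f.val n - g.val n| ≤ |z.val n|) :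
    g ∈ KF F := by
  intro m
  filter_upwards [hf (m + 1), hzK (m + 1)] with n h1 h2
  have : |g.val n| ≤ |f.val n| + |f.val n - g.val n| := by
    have := abs_sub_abs_le_abs_sub (g.val n) (f.val n)
    rw [abs_sub_comm] at this
    linarith
  have hlt : |g.val n| < (1/2 : ℝ) ^ (m+1) + (1/2) ^ (m+1) := by
    have := hb n
    linarith
  calc |g.val n| < (1/2 : ℝ) ^ (m+1) + (1/2) ^ (m+1) := hlt
    _ = (1/2 : ℝ) ^ m := by ring

/-- Let `h` be a homeomorphism of the Hilbert cube and `D ⊆ (-1,1)^ℕ` a countable dense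
subset of `Q`. If there is `z ∈ C_F` such that `|d(n) - h(d)(n)| ≤ |z(n)|` for every `d ∈ D`
and `n`, then `h[K_F] = K_F`. -/
theorem image_KF_of_dense_bound (F : Filter ℕ) (hproper : F.NeBot)
    (hfree : F ≤ Filter.cofinite) (h : Hcube ≃ₜ Hcube)
    (D : Set Hcube) (hDsub : D ⊆ pseudoInt) (hDc : D.Countable) (hDdense : Dense D)
    (z : Hcube) (hz : z ∈ CF F)
    (hbound : ∀ d ∈ D, ∀ n : ℕ, |d.val n - (h d).val n| ≤ |z.val n|) :
    h '' KF F = KF F := by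
  have hzK : z ∈ KF F := hz.1
  -- extend the bound to all of Q by density
  have hall : ∀ x : Hcube, ∀ n : ℕ, |x.val n - (h x).val n| ≤ |z.val n| := by
    intro x n
    have hc : Continuous fun y : Hcube => |y.val n - (h y).val n| := by
      apply Continuous.abs
      exact ((continuous_apply n).comp continuous_subtype_val).sub
        (((continuous_apply n).comp continuous_subtype_val).comp h.continuous)
    have hclosed : IsClosed {y : Hcube | |y.val n - (h y).val n| ≤ |z.val n|} :=
      isClosed_le hc continuous_const
    have hsub : D ⊆ {y : Hcube | |y.val n - (h y).val n| ≤ |z.val n|} :=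
      fun d hd => hbound d hd n
    have := hclosed.closure_subset_iff.mpr hsub
    exact this (hDdense x)
  ext y
  constructor
  · rintro ⟨f, hf, rfl⟩
    exact KF_perturb F z hzK f (h f) hf (fun n => hall f n)
  · intro hy
    refine ⟨h.symm y, ?_, h.apply_symm_apply y⟩
    apply KF_perturb F z hzK y (h.symm y) hy
    intro n
    have := hall (h.symm y) n
    rw [h.apply_symm_apply] at this
    rw [abs_sub_comm]
    exact this
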